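/- Let q : E ⥤ B be a functor and M : E ⥤ E an endofunctor with M ⋙ q = q that sends strongly cartesian morphisms (with respect to q) to strongly cartesian morphisms, equipped with vertical natural transformations ε : M ⟹ 𝟭 E and δ : M ⟹ M ⋙ M making (M, ε, δ) a comonad. Let f : X ⟶ Y be strongly cartesian with respect to q, and let s : Y ⟶ M.obj Y be a vertical morphism. Then: (i) there exists a unique vertical morphism t : X ⟶ M.obj X such that t ≫ M.map f = f ≫ s; (ii) if s satisfies the counit law s ≫ ε.app Y = 𝟙 Y, then t satisfies t ≫ ε.app X = 𝟙 X; (iii) if s additionally satisfies the comultiplication law s ≫ δ.app Y = s ≫ M.map s, then t satisfies t ≫ δ.app X = t ≫ M.map t. -/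

import Mathlib

open CategoryTheory

lemma vert_iff {B E : Type*} [Category B] [Category E] (q : E ⥤ B)
    {a b : E} (h : q.obj b = q.obj a) (t : a ⟶ b) :
    q.IsHomLift (𝟙 (q.obj a)) t ↔ q.IsHomLift (eqToHom h.symm) t := by
  rw [show eqToHom h.symm = 𝟙 (q.obj a) ≫ eqToHom h.symm by simp,
    IsHomLift.lift_comp_eqToHom_iff]

lemma vert_map {B E : Type*} [Category B] [Category E] (q : E ⥤ B) (M : E ⥤ E)
    (hM : M ⋙ q = q) {a b : E} (ψ : a ⟶ b) (h : q.IsHomLift (𝟙 (q.obj a)) ψ) :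
    q.IsHomLift (𝟙 (q.obj a)) (M.map ψ) := by
  have hb : q.obj b = q.obj a := IsHomLift.codomain_eq q (𝟙 (q.obj a)) ψ
  have hmap : q.map ψ = eqToHom rfl ≫ 𝟙 (q.obj a) ≫ eqToHom hb.symm := by
    have := (vert_iff q hb ψ).mp h
    have := IsHomLift.eq_of_isHomLift q (eqToHom hb.symm) ψ
    simp [← this]
  apply IsHomLift.of_fac' q _ _ (Functor.congr_obj hM a) (by
    rw [show q.obj (M.obj b) = q.obj b from Functor.congr_obj hM b, hb])
  have := Functor.congr_hom hM ψ
  simp only [Functor.comp_map] at this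
  rw [this, hmap]
  simp

/-- Let `q : E ⥤ B` be a functor and `(M, ε, δ)` a fibred comonad over `B`, i.e. an
endofunctor `M : E ⥤ E` with `M ⋙ q = q` preserving strongly cartesian morphisms, with
vertical counit and comultiplication satisfying the comonad laws.  If `f : X ⟶ Y` is
strongly cartesian and `s : Y ⟶ M.obj Y` is a vertical morphism, then there is a unique
vertical `t : X ⟶ M.obj X` with `t ≫ M.map f = f ≫ s`; moreover `t` satisfies the counit
law whenever `s` does, and the comultiplication law whenever `s` satisfies both laws. -/
theorem comonad_coalgebra_structure_creates_cartesian_lifts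
    {B E : Type*} [Category B] [Category E]
    (q : E ⥤ B) (M : E ⥤ E) (hM : M ⋙ q = q)
    (hMcart : ∀ {X Y : E} (φ : X ⟶ Y), q.IsStronglyCartesian (q.map φ) φ →
      q.IsStronglyCartesian (q.map (M.map φ)) (M.map φ))
    (ε : M ⟶ 𝟭 E) (δ : M ⟶ M ⋙ M)
    (hε : ∀ X : E, q.IsHomLift (𝟙 (q.obj X)) (ε.app X))
    (hδ : ∀ X : E, q.IsHomLift (𝟙 (q.obj X)) (δ.app X))
    (counit_left : ∀ X : E, δ.app X ≫ ε.app (M.obj X) = 𝟙 (M.obj X))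
    (counit_right : ∀ X : E, δ.app X ≫ M.map (ε.app X) = 𝟙 (M.obj X))
    (coassoc : ∀ X : E, δ.app X ≫ δ.app (M.obj X) = δ.app X ≫ M.map (δ.app X))
    {X Y : E} (f : X ⟶ Y) (hf : q.IsStronglyCartesian (q.map f) f)
    (s : Y ⟶ M.obj Y) (hs : q.IsHomLift (𝟙 (q.obj Y)) s) :
    (∃! t : X ⟶ M.obj X, q.IsHomLift (𝟙 (q.obj X)) t ∧ t ≫ M.map f = f ≫ s) ∧
    (∀ t : X ⟶ M.obj X, (q.IsHomLift (𝟙 (q.obj X)) t ∧ t ≫ M.map f = f ≫ s) →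
      ((s ≫ ε.app Y = 𝟙 Y → t ≫ ε.app X = 𝟙 X) ∧
       (s ≫ ε.app Y = 𝟙 Y → s ≫ δ.app Y = s ≫ M.map s →
         t ≫ δ.app X = t ≫ M.map t))) := by

  have eqX : q.obj (M.obj X) = q.obj X := Functor.congr_obj hM X
  have eqY : q.obj (M.obj Y) = q.obj Y := Functor.congr_obj hM Y
  haveI hfI := hf
  haveI hsI := hs
  haveI hMf := hMcart f hf
  haveI hMMf := hMcart (M.map f) (hMcart f hf)
  haveI : q.IsHomLift (q.map f ≫ eqToHom eqY.symm) (f ≫ s) := by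
    rw [IsHomLift.lift_comp_eqToHom_iff]
    exact IsHomLift.comp_lift_id_right q (q.map f) f s
  have hcomp : q.map f ≫ eqToHom eqY.symm = eqToHom eqX.symm ≫ q.map (M.map f) := by
    have := Functor.congr_hom hM f
    simp only [Functor.comp_map] at this
    rw [show q.map (M.map f) = _ from this]
    simp
  have key := Functor.IsStronglyCartesian.universal_property q (q.map (M.map f)) (M.map f) (eqToHom eqX.symm)
    (q.map f ≫ eqToHom eqY.symm) hcomp (f ≫ s)
  constructor
  · obtain ⟨t, ⟨ht1, ht2⟩, htu⟩ := key
    refine ⟨t, ⟨(vert_iff q eqX t).mpr ht1, ht2⟩, ?_⟩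
    intro t' ⟨ht1', ht2'⟩
    exact htu t' ⟨(vert_iff q eqX t').mp ht1', ht2'⟩
  · rintro t ⟨ht1, ht2⟩
    haveI := ht1
    have counit : s ≫ ε.app Y = 𝟙 Y → t ≫ ε.app X = 𝟙 X := by
      intro hcu
      haveI := hε X
      haveI : q.IsHomLift (𝟙 (q.obj X)) (t ≫ ε.app X) :=
        IsHomLift.comp_of_lift_id q (q.obj X) t (ε.app X)
      apply Functor.IsStronglyCartesian.ext q (q.map f) f (𝟙 (q.obj X))
      rw [Category.assoc,
        show ε.app X ≫ f = M.map f ≫ ε.app Y by simpa using (ε.naturality f).symm,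
        ← Category.assoc, ht2, Category.assoc, hcu, Category.comp_id, Category.id_comp]
    refine ⟨counit, fun hcu hco => ?_⟩
    haveI := hδ X
    haveI : q.IsHomLift (𝟙 (q.obj X)) (M.map t) := vert_map q M hM t ht1
    haveI h1 : q.IsHomLift (𝟙 (q.obj X)) (t ≫ δ.app X) :=
      IsHomLift.comp_of_lift_id q (q.obj X) t (δ.app X)
    haveI h2 : q.IsHomLift (𝟙 (q.obj X)) (t ≫ M.map t) :=
      IsHomLift.comp_of_lift_id q (q.obj X) t (M.map t)
    have eqXX : q.obj (M.obj (M.obj X)) = q.obj X := by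
      rw [show q.obj (M.obj (M.obj X)) = q.obj (M.obj X) from
        Functor.congr_obj hM (M.obj X), eqX]
    haveI := (vert_iff q eqXX (t ≫ δ.app X)).mp h1
    haveI := (vert_iff q eqXX (t ≫ M.map t)).mp h2
    apply Functor.IsStronglyCartesian.ext q (q.map (M.map (M.map f))) (M.map (M.map f))
      (eqToHom eqXX.symm)
    have lhs : (t ≫ δ.app X) ≫ M.map (M.map f) = f ≫ s ≫ M.map s := by
      rw [Category.assoc,
        show δ.app X ≫ M.map (M.map f) = M.map f ≫ δ.app Y by
          simpa using (δ.naturality f).symm,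
        ← Category.assoc, ht2, Category.assoc, hco]
    have rhs : (t ≫ M.map t) ≫ M.map (M.map f) = f ≫ s ≫ M.map s := by
      rw [Category.assoc, ← M.map_comp, ht2, M.map_comp, ← Category.assoc, ht2,
        Category.assoc]
    rw [lhs, rhs]
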